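/- Let η : X → [0,1], f*(x) = sign(2η(x)-1), and P^X a probability measure on X. For any measurable function f : X → ℝ, the excess hinge risk dominates the excess misclassification risk: R(sign(f)) - R* ≤ A(f) - A*, where A(f) = E[(1 - Y f(X))_+], A* = inf over all measurable f of A(f) = A(f*), and R, R* are the misclassification risk and Bayes risk. -/
import Mathlib

open MeasureTheory

lemma zhang_key (e v : ℝ) (h0 : 0 ≤ e) (h1 : e ≤ 1) :
    (if 0 ≤ v then 1 - e else e) + (if (0:ℝ) ≤ 2 * e - 1 then 2 * (1 - e) else 2 * e)
      ≤ (e * max 0 (1 - v) + (1 - e) * max 0 (1 + v))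
        + (if (0:ℝ) ≤ 2 * e - 1 then 1 - e else e) := by
  rcases max_cases 0 (1 - v) with ⟨hm1, hv1⟩ | ⟨hm1, hv1⟩ <;>
  rcases max_cases 0 (1 + v) with ⟨hm2, hv2⟩ | ⟨hm2, hv2⟩ <;>
  rw [hm1, hm2] <;> split_ifs <;> nlinarith

/-- Zhang's inequality: the excess hinge risk dominates the excess
misclassification risk. -/
theorem zhang_inequality {X : Type*} [MeasurableSpace X] (μ : Measure X)
    [IsProbabilityMeasure μ] (η : X → ℝ) (hη : Measurable η)
    (hη01 : ∀ x, 0 ≤ η x ∧ η x ≤ 1)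
    (f : X → ℝ) (hf : Measurable f)
    (hint : Integrable (fun x => η x * max 0 (1 - f x)
        + (1 - η x) * max 0 (1 + f x)) μ)
    (fstar : X → ℝ) (hfstar : ∀ x, fstar x = if 0 ≤ 2 * η x - 1 then 1 else -1)
    (R : (X → ℝ) → ℝ)
    (hR : ∀ g : X → ℝ, R g = ∫ x, (η x * (if g x = -1 then 1 else 0)
        + (1 - η x) * (if g x = 1 then 1 else 0)) ∂μ)
    (A : (X → ℝ) → ℝ)
    (hA : ∀ g : X → ℝ, A g = ∫ x, (η x * max 0 (1 - g x)
        + (1 - η x) * max 0 (1 + g x)) ∂μ) :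
    R (fun x => if 0 ≤ f x then 1 else -1) - R fstar ≤ A f - A fstar := by
  rw [hR, hR, hA, hA]
  set g1 : X → ℝ := fun x => if 0 ≤ f x then 1 - η x else η x with hg1
  set g2 : X → ℝ := fun x => if 0 ≤ 2 * η x - 1 then 1 - η x else η x with hg2
  set g3 : X → ℝ := fun x => η x * max 0 (1 - f x) + (1 - η x) * max 0 (1 + f x) with hg3
  set g4 : X → ℝ := fun x => if 0 ≤ 2 * η x - 1 then 2 * (1 - η x) else 2 * η x with hg4
  have e1 : (fun x => η x * (if (if 0 ≤ f x then (1:ℝ) else -1) = -1 then 1 else 0)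
      + (1 - η x) * (if (if 0 ≤ f x then (1:ℝ) else -1) = 1 then 1 else 0)) = g1 := by
    funext x; by_cases h : 0 ≤ f x <;> simp [hg1, h] <;> norm_num
  have e2 : (fun x => η x * (if fstar x = -1 then (1:ℝ) else 0)
      + (1 - η x) * (if fstar x = 1 then (1:ℝ) else 0)) = g2 := by
    funext x; rw [hfstar x]; simp only [hg2]
    by_cases h : 0 ≤ 2 * η x - 1
    · rw [if_pos h, if_pos h]; norm_num
    · rw [if_neg h, if_neg h]; norm_num
  have e4 : (fun x => η x * max 0 (1 - fstar x) + (1 - η x) * max 0 (1 + fstar x)) = g4 := by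
    funext x; rw [hfstar x]; simp only [hg4]
    by_cases h : 0 ≤ 2 * η x - 1
    · rw [if_pos h, if_pos h]; norm_num; ring
    · rw [if_neg h, if_neg h]; norm_num; ring
  rw [e1, e2, e4]
  have hms : MeasurableSet {x : X | 0 ≤ f x} :=
    measurableSet_le measurable_const hf
  have hms2 : MeasurableSet {x : X | 0 ≤ 2 * η x - 1} :=
    measurableSet_le measurable_const (by fun_prop)
  have i1 : Integrable g1 μ := by
    refine (integrable_const (1:ℝ)).mono' ?_ ?_
    · exact (Measurable.ite hms (by fun_prop) hη).aestronglyMeasurable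
    · filter_upwards with x
      have := hη01 x
      simp only [hg1]; split_ifs <;> rw [Real.norm_eq_abs, abs_le] <;> constructor <;> linarith
  have i2 : Integrable g2 μ := by
    refine (integrable_const (1:ℝ)).mono' ?_ ?_
    · exact (Measurable.ite hms2 (by fun_prop) hη).aestronglyMeasurable
    · filter_upwards with x
      have := hη01 x
      simp only [hg2]; split_ifs <;> rw [Real.norm_eq_abs, abs_le] <;> constructor <;> linarith
  have i3 : Integrable g3 μ := hint
  have i4 : Integrable g4 μ := by
    refine (integrable_const (2:ℝ)).mono' ?_ ?_
    · exact (Measurable.ite hms2 (by fun_prop) (by fun_prop)).aestronglyMeasurable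
    · filter_upwards with x
      have := hη01 x
      simp only [hg4]; split_ifs <;> rw [Real.norm_eq_abs, abs_le] <;> constructor <;> linarith
  have key : ∫ x, (g1 x + g4 x) ∂μ ≤ ∫ x, (g3 x + g2 x) ∂μ := by
    refine integral_mono (i1.add i4) (i3.add i2) fun x => ?_
    exact zhang_key (η x) (f x) (hη01 x).1 (hη01 x).2
  rw [integral_add i1 i4, integral_add i3 i2] at key
  linarith
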